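/- Suppose the scaling exponent satisfies k ≥ q. Then every global minimizer w* of the overall loss L over the nonnegative orthant satisfies w*_j = 0 for every index j such that A_j > min_{i} A_i. In other words, at any global minimum all weight is allocated exclusively to circuits of minimal parameter norm. -/
import Mathlib


open Real

lemma rpow_add_le_add_rpow_real {a b p : ℝ} (ha : 0 ≤ a) (hb : 0 ≤ b)
    (hp : 0 ≤ p) (hp1 : p ≤ 1) : (a + b) ^ p ≤ a ^ p + b ^ p := by
  lift a to NNReal using ha
  lift b to NNReal using hb
  rw [← NNReal.coe_add, ← NNReal.coe_rpow, ← NNReal.coe_rpow, ← NNReal.coe_rpow,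
    ← NNReal.coe_add, NNReal.coe_le_coe]
  exact NNReal.rpow_add_le_add_rpow a b hp hp1

/-- (Case 1 of the efficiency theorem.) For `n ≥ 1` circuits with
parameter norms `A i > 0`, weight-decay coefficient `lam > 0`, norm exponent `q > 0`,
and scaling exponent `k ≥ q`, any global minimizer `w` over the nonnegative orthant of
the overall loss `L w = T (∑ i, w i) + (lam / q) * ∑ i, ((w i)^(1/k) * A i)^q`
satisfies `w j = 0` for every `j` with `A j > min_i A i`. -/
theorem weight_zero_on_inefficient_circuits
    {n : ℕ} (hn : 1 ≤ n) (A : Fin n → ℝ) (hA : ∀ i, 0 < A i)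
    (lam q k : ℝ) (hlam : 0 < lam) (hq : 0 < q) (hk : 0 < k) (hkq : q ≤ k)
    (T : ℝ → ℝ)
    (w : Fin n → ℝ) (hw : ∀ i, 0 ≤ w i)
    (hmin : ∀ v : Fin n → ℝ, (∀ i, 0 ≤ v i) →
      T (∑ i, w i) + (lam / q) * ∑ i, ((w i) ^ (1 / k) * A i) ^ q ≤
        T (∑ i, v i) + (lam / q) * ∑ i, ((v i) ^ (1 / k) * A i) ^ q)
    (j : Fin n) (hj : Finset.univ.inf' ⟨j, Finset.mem_univ j⟩ A < A j) :
    w j = 0 := by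
  by_contra hwj0
  have hwj : 0 < w j := lt_of_le_of_ne (hw j) (Ne.symm hwj0)
  -- the minimizing index
  obtain ⟨i0, -, hi0⟩ := Finset.exists_mem_eq_inf' ⟨j, Finset.mem_univ j⟩ A
  rw [hi0] at hj
  have hij : i0 ≠ j := fun h => absurd hj (by rw [h]; exact lt_irrefl _)
  -- the competitor
  set v : Fin n → ℝ := Function.update (Function.update w j 0) i0 (w i0 + w j) with hv
  have hvio : v i0 = w i0 + w j := by simp [hv]
  have hvj : v j = 0 := by
    simp [hv, Function.update_of_ne (Ne.symm hij), Function.update_self]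
  have hvother : ∀ i, i ≠ i0 → i ≠ j → v i = w i := by
    intro i h1 h2
    simp [hv, Function.update_of_ne h1, Function.update_of_ne h2]
  have hvnn : ∀ i, 0 ≤ v i := by
    intro i
    by_cases h1 : i = i0
    · rw [h1, hvio]; exact add_nonneg (hw i0) (hw j)
    by_cases h2 : i = j
    · subst h2; rw [hvj]
    · rw [hvother i h1 h2]; exact hw i
  -- split sums over {i0, j}
  have hjmem : j ∈ Finset.univ.erase i0 := Finset.mem_erase.2 ⟨Ne.symm hij, Finset.mem_univ j⟩
  have hsplit : ∀ g : Fin n → ℝ, ∑ i, g i =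
      g i0 + (g j + ∑ i ∈ (Finset.univ.erase i0).erase j, g i) := by
    intro g
    rw [Finset.add_sum_erase _ g hjmem, Finset.add_sum_erase _ g (Finset.mem_univ i0)]
  have hrest : ∀ g : Fin n → ℝ → ℝ, ∑ i ∈ (Finset.univ.erase i0).erase j, g i (v i) =
      ∑ i ∈ (Finset.univ.erase i0).erase j, g i (w i) := by
    intro g
    refine Finset.sum_congr rfl fun i hi => ?_
    rw [hvother i (Finset.mem_erase.1 (Finset.mem_erase.1 hi).2).1 (Finset.mem_erase.1 hi).1]
  -- sums are equal
  have hsum : ∑ i, v i = ∑ i, w i := by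
    rw [hsplit v, hsplit w, hrest (fun _ x => x), hvio, hvj]; ring
  -- term rewriting : (x^(1/k) * a)^q = x^(q/k) * a^q for 0 ≤ x, 0 < a
  have hterm : ∀ x a : ℝ, 0 ≤ x → 0 ≤ a →
      (x ^ (1/k) * a) ^ q = x ^ (q/k) * a ^ q := by
    intro x a hx ha
    rw [Real.mul_rpow (Real.rpow_nonneg hx _) ha, ← Real.rpow_mul hx]
    congr 2
    field_simp
  have hr0 : 0 < q / k := div_pos hq hk
  have hr1 : q / k ≤ 1 := (div_le_one hk).2 hkq
  -- strict inequality on regularizer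
  have hkey : ∑ i, ((v i) ^ (1/k) * A i) ^ q < ∑ i, ((w i) ^ (1/k) * A i) ^ q := by
    rw [hsplit (fun i => ((v i) ^ (1/k) * A i) ^ q),
        hsplit (fun i => ((w i) ^ (1/k) * A i) ^ q)]
    rw [hrest (fun i x => (x ^ (1/k) * A i) ^ q), hvio, hvj]
    have h0 : ((0:ℝ) ^ (1/k) * A j) ^ q = 0 := by
      rw [Real.zero_rpow (one_div_ne_zero hk.ne'), zero_mul,
        Real.zero_rpow hq.ne']
    rw [h0, hterm _ _ (add_nonneg (hw i0) (hw j)) (hA i0).le, hterm _ _ (hw i0) (hA i0).le,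
      hterm _ _ (hw j) (hA j).le]
    have hsub : (w i0 + w j) ^ (q/k) ≤ (w i0) ^ (q/k) + (w j) ^ (q/k) :=
      rpow_add_le_add_rpow_real (hw i0) (hw j) hr0.le hr1
    have hApos : (0:ℝ) < A i0 ^ q := Real.rpow_pos_of_pos (hA i0) q
    have hAlt : A i0 ^ q < A j ^ q := Real.rpow_lt_rpow (hA i0).le hj hq
    have hwpos : (0:ℝ) < (w j) ^ (q/k) := Real.rpow_pos_of_pos hwj _
    nlinarith [mul_le_mul_of_nonneg_right hsub hApos.le,
      mul_lt_mul_of_pos_left hAlt hwpos]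
  -- contradiction with minimality
  have hm := hmin v hvnn
  rw [hsum] at hm
  have hc : 0 < lam / q := div_pos hlam hq
  nlinarith [mul_lt_mul_of_pos_left hkey hc]
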